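/- Define f̄_i(x) := -√n·⟨x, e_i⟩ + ‖x‖²/2 on ℝ^n and F̄ = (1/n)∑_{i=1}^n f̄_i. Then the unique global minimizer of F̄ is x* = (1/√n)∑_{i=1}^n e_i, and any x ∈ ℝ^n whose support has size at most n/2 satisfies F̄(x) - inf F̄ ≥ 1/4. -/

import Mathlib

open scoped RealInnerProductSpace BigOperators

/-- The hard instance `f̄_i(x) = -√n·⟨x, e_i⟩ + ‖x‖²/2` on `ℝ^n`. -/
noncomputable def fBar (n : ℕ) (i : Fin n) (x : EuclideanSpace ℝ (Fin n)) : ℝ :=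
  -(Real.sqrt n) * ⟪x, EuclideanSpace.single i (1 : ℝ)⟫ + ‖x‖ ^ 2 / 2

/-- The average `F̄ = (1/n)∑ᵢ f̄_i`. -/
noncomputable def FBar (n : ℕ) (x : EuclideanSpace ℝ (Fin n)) : ℝ :=
  (1 / (n : ℝ)) * ∑ i : Fin n, fBar n i x

lemma FBar_eq (n : ℕ) (hn : 0 < n) (x : EuclideanSpace ℝ (Fin n)) :
    FBar n x = (∑ i : Fin n, (x i - (Real.sqrt n)⁻¹) ^ 2) / 2 - 1 / 2 := by
  have hnR : (0:ℝ) < n := by exact_mod_cast hn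
  have hs : Real.sqrt n * Real.sqrt n = n := Real.mul_self_sqrt hnR.le
  have hs0 : Real.sqrt n ≠ 0 := by positivity
  have hnorm : ‖x‖ ^ 2 = ∑ i, x i ^ 2 := by
    rw [EuclideanSpace.norm_eq, Real.sq_sqrt (by positivity)]
    simp [sq_abs]
  have hinner : ∀ i : Fin n, ⟪x, EuclideanSpace.single i (1:ℝ)⟫ = x i := by
    intro i; simp [EuclideanSpace.inner_single_right]
  have key : ∑ i : Fin n, (x i - (Real.sqrt n)⁻¹) ^ 2
      = (∑ i, x i ^ 2) - 2 * (Real.sqrt n)⁻¹ * (∑ i, x i) + n * ((Real.sqrt n)⁻¹)^2 := by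
    rw [Finset.mul_sum,
      show (n:ℝ) * ((Real.sqrt n)⁻¹)^2 = ∑ _i : Fin n, ((Real.sqrt n)⁻¹)^2 by
        simp [Finset.sum_const, mul_comm],
      ← Finset.sum_sub_distrib, ← Finset.sum_add_distrib]
    exact Finset.sum_congr rfl fun i _ => by ring
  unfold FBar fBar
  simp only [hinner, hnorm, neg_mul, Finset.sum_add_distrib, Finset.sum_neg_distrib,
    Finset.sum_const, Finset.card_univ, Fintype.card_fin, nsmul_eq_mul, ← Finset.mul_sum]
  rw [key]
  field_simp
  ring_nf
  rw [Real.sq_sqrt hnR.le]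
  linear_combination (-2 * (∑ i, x i) * Real.sqrt n) * hs

/-- `x* = (1/√n)∑ᵢ eᵢ` is the unique global minimizer of `F̄`, and any `x`
supported on at most `n/2` coordinates satisfies `F̄(x) - inf F̄ ≥ 1/4`. -/
theorem FBar_minimizer_and_gap (n : ℕ) (hn : 0 < n) :
    (∀ z : EuclideanSpace ℝ (Fin n),
        FBar n ((Real.sqrt n)⁻¹ • ∑ i : Fin n, EuclideanSpace.single i (1 : ℝ)) ≤ FBar n z) ∧
      (∀ z : EuclideanSpace ℝ (Fin n), (∀ w, FBar n z ≤ FBar n w) →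
        z = (Real.sqrt n)⁻¹ • ∑ i : Fin n, EuclideanSpace.single i (1 : ℝ)) ∧
      ∀ x : EuclideanSpace ℝ (Fin n),
        ((Finset.univ.filter fun i : Fin n => x i ≠ 0).card : ℝ) ≤ (n : ℝ) / 2 →
          FBar n x - ⨅ z : EuclideanSpace ℝ (Fin n), FBar n z ≥ 1 / 4 := by
  have hnR : (0:ℝ) < n := by exact_mod_cast hn
  set c : ℝ := (Real.sqrt n)⁻¹ with hc
  have hc2 : c ^ 2 = (n:ℝ)⁻¹ := by
    rw [hc, ← Real.sqrt_inv]
    exact Real.sq_sqrt (by positivity)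
  set xs : EuclideanSpace ℝ (Fin n) := (Real.sqrt n)⁻¹ • ∑ i : Fin n, EuclideanSpace.single i (1 : ℝ) with hxs
  have hxsj : ∀ j : Fin n, xs j = c := by
    intro j
    have h1 : (∑ i : Fin n, EuclideanSpace.single i (1:ℝ)) j = 1 := by
      rw [WithLp.ofLp_sum, Finset.sum_apply]; simp [EuclideanSpace.single_apply]
    simp [hxs, hc, PiLp.smul_apply, h1]
  have hxsval : FBar n xs = -(1/2) := by
    rw [FBar_eq n hn]
    simp [hxsj, hc]
  have hlb : ∀ z : EuclideanSpace ℝ (Fin n), -(1/2) ≤ FBar n z := by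
    intro z
    rw [FBar_eq n hn]
    have : (0:ℝ) ≤ ∑ i : Fin n, (z i - c) ^ 2 :=
      Finset.sum_nonneg fun i _ => sq_nonneg _
    linarith
  have hmin : ∀ z : EuclideanSpace ℝ (Fin n), FBar n xs ≤ FBar n z := by
    intro z; rw [hxsval]; exact hlb z
  refine ⟨hmin, ?_, ?_⟩
  · intro z hz
    have hle : FBar n z ≤ -(1/2) := hxsval ▸ hz xs
    rw [FBar_eq n hn] at hle
    have hsum : ∑ i : Fin n, (z i - c) ^ 2 ≤ 0 := by linarith
    have hzero : ∀ i ∈ Finset.univ, (z i - c) ^ 2 = 0 := by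
      rw [← Finset.sum_eq_zero_iff_of_nonneg fun i _ => sq_nonneg _]
      exact le_antisymm hsum (Finset.sum_nonneg fun i _ => sq_nonneg _)
    ext j
    have := hzero j (Finset.mem_univ j)
    have : z j = c := by
      have := pow_eq_zero_iff (n := 2) (by norm_num) |>.mp this
      linarith
    rw [this, ← hxsj j]
  · intro x hcard
    have hinf : ⨅ z : EuclideanSpace ℝ (Fin n), FBar n z = -(1/2) := by
      apply le_antisymm
      · exact hxsval ▸ ciInf_le ⟨-(1/2), by rintro _ ⟨z, rfl⟩; exact hlb z⟩ xs
      · exact le_ciInf hlb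
    rw [hinf, FBar_eq n hn]
    set S := Finset.univ.filter fun i : Fin n => x i ≠ 0 with hS
    have hsub : ∑ i ∈ Sᶜ, (x i - c) ^ 2 ≤ ∑ i : Fin n, (x i - c) ^ 2 :=
      Finset.sum_le_sum_of_subset_of_nonneg (Finset.subset_univ _)
        (fun i _ _ => sq_nonneg _)
    have hval : ∑ i ∈ Sᶜ, (x i - c) ^ 2 = (Sᶜ.card : ℝ) * (n:ℝ)⁻¹ := by
      rw [Finset.sum_congr rfl fun i hi => ?_, Finset.sum_const, nsmul_eq_mul]
      have hx0 : x i = 0 := by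
        simpa [hS] using (Finset.mem_compl.mp hi)
      rw [hx0, zero_sub, neg_sq, hc2]
    have hccard : ((n:ℝ) / 2) ≤ (Sᶜ.card : ℝ) := by
      have h1 : (Sᶜ.card : ℝ) = n - S.card := by
        rw [Finset.card_compl, Fintype.card_fin]
        have : S.card ≤ n := by simpa using Finset.card_le_univ S
        push_cast [Nat.cast_sub this]
        ring
      rw [h1]; linarith
    have h2 : (n:ℝ)/2 * (n:ℝ)⁻¹ ≤ (Sᶜ.card : ℝ) * (n:ℝ)⁻¹ :=
      mul_le_mul_of_nonneg_right hccard (by positivity)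
    have h3 : (n:ℝ)/2 * (n:ℝ)⁻¹ = 1/2 := by field_simp
    rw [ge_iff_le]
    have := hval ▸ hsub
    linarith
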